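/- A ring R is semiperfect if and only if R is δ-semiperfect and semilocal (i.e., R/Jac(R) is semisimple). -/

import Mathlib

open Submodule

section Defs

universe u v

variable (R : Type u) [Ring R]

/-- A submodule `L` is essential in `M` if it intersects every nonzero submodule nontrivially. -/
def IsEssentialSub {M : Type v} [AddCommGroup M] [Module R M] (L : Submodule R M) : Prop :=
  ∀ K : Submodule R M, K ≠ ⊥ → L ⊓ K ≠ ⊥

/-- A module is singular if it is isomorphic to `N ⧸ L` for some module `N` and
essential submodule `L ≤ N`. -/
def IsSingular (M : Type v) [AddCommGroup M] [Module R M] : Prop :=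
  ∃ (N : Type v) (_ : AddCommGroup N) (_ : Module R N) (L : Submodule R N),
    IsEssentialSub R L ∧ Nonempty ((N ⧸ L) ≃ₗ[R] M)

variable {M : Type v} [AddCommGroup M] [Module R M]

/-- `N` is small in `M`: `N + Z ≠ M` for every proper submodule `Z`. -/
def SmallSub (N : Submodule R M) : Prop :=
  ∀ Z : Submodule R M, Z ≠ ⊤ → N ⊔ Z ≠ ⊤

/-- `N` is δ-small in `M`: `N + Z ≠ M` for every proper submodule `Z` with `M ⧸ Z` singular. -/
def DeltaSmall (N : Submodule R M) : Prop :=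
  ∀ Z : Submodule R M, Z ≠ ⊤ → IsSingular R (M ⧸ Z) → N ⊔ Z ≠ ⊤

/-- `δ(M)`: the sum of all δ-small submodules of `M`. -/
def deltaRad : Submodule R M := sSup {N : Submodule R M | DeltaSmall R N}

/-- The radical: intersection of all maximal submodules. -/
def radM : Submodule R M := sInf {K : Submodule R M | IsCoatom K}

/-- The socle: sum of all simple submodules. -/
def socM : Submodule R M := sSup {S : Submodule R M | IsAtom S}

/-- `N` is a δ-supplement of `K` in `M`: `N + K = M` and `N ∩ K` is δ-small in `N`. -/
def IsDeltaSupplement (N K : Submodule R M) : Prop :=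
  N ⊔ K = ⊤ ∧ DeltaSmall R ((N ⊓ K).comap N.subtype)

/-- `N` is a δ-supplement submodule of `M`. -/
def IsDeltaSupplementSub (N : Submodule R M) : Prop :=
  ∃ K : Submodule R M, IsDeltaSupplement R N K

/-- `N` is a supplement of `K` in `M`: `N + K = M` and `N ∩ K` is small in `N`. -/
def IsSupplement (N K : Submodule R M) : Prop :=
  N ⊔ K = ⊤ ∧ SmallSub R ((N ⊓ K).comap N.subtype)

/-- `M` is δ-supplemented: every submodule has a δ-supplement. -/
def DeltaSupplemented (M : Type v) [AddCommGroup M] [Module R M] : Prop :=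
  ∀ L : Submodule R M, ∃ N : Submodule R M, IsDeltaSupplement R N L

/-- `M` is supplemented: every submodule has a supplement. -/
def Supplemented (M : Type v) [AddCommGroup M] [Module R M] : Prop :=
  ∀ L : Submodule R M, ∃ N : Submodule R M, IsSupplement R N L

/-- `N` is δ-coclosed in `M`: if `X ≤ N`, `N/X` is singular and `N/X ≪_δ M/X`, then `X = N`. -/
def DeltaCoclosed (N : Submodule R M) : Prop :=
  ∀ X : Submodule R M, X ≤ N →
    IsSingular R ↥(N.map X.mkQ) → DeltaSmall R (N.map X.mkQ) → X = N

/-- `N` is coclosed in `M`: if `X ≤ N` and `N/X ≪ M/X`, then `X = N`. -/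
def Coclosed (N : Submodule R M) : Prop :=
  ∀ X : Submodule R M, X ≤ N → SmallSub R (N.map X.mkQ) → X = N

/-- A module is local if it has a largest proper submodule. -/
def LocalModule (M : Type v) [AddCommGroup M] [Module R M] : Prop :=
  ∃ L : Submodule R M, L ≠ ⊤ ∧ ∀ K : Submodule R M, K ≠ ⊤ → K ≤ L

/-- `M` is δ-local if `δ(M)` is δ-small in `M` and `δ(M)` is a maximal submodule. -/
def DeltaLocal (M : Type v) [AddCommGroup M] [Module R M] : Prop :=
  DeltaSmall R (deltaRad R : Submodule R M) ∧ IsCoatom (deltaRad R : Submodule R M)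

end Defs
section Aux

universe u v

variable {R : Type u} [Ring R] {M : Type v} [AddCommGroup M] [Module R M]

/-- `K` is small in the submodule `N` (relative notion, stated in the ambient module). -/
def SmallIn (K N : Submodule R M) : Prop :=
  ∀ Z : Submodule R M, Z ≤ N → K ⊔ Z = N → Z = N

/-- `K` is δ-small in the submodule `N` (relative notion, stated in the ambient module). -/
def DeltaSmallIn (K N : Submodule R M) : Prop :=
  ∀ Z : Submodule R M, Z ≤ N → K ⊔ Z = N →
    IsSingular R (↥N ⧸ Z.comap N.subtype) → Z = N

lemma smallIn_mono {K' K N : Submodule R M} (hK' : K' ≤ K) (hKN : K ≤ N)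
    (h : SmallIn K N) : SmallIn K' N := by
  intro Z hZ hsup
  have : K ⊔ Z = N := le_antisymm (sup_le hKN hZ) (by rw [← hsup]; exact sup_le_sup_right hK' Z)
  exact h Z hZ this

lemma smallIn_of_le {K V₁ V : Submodule R M} (h : SmallIn K V₁) (hK : K ≤ V₁) (hV : V₁ ≤ V) :
    SmallIn K V := by
  intro Z hZ hsup
  have hmod : (K ⊔ Z) ⊓ V₁ = K ⊔ (Z ⊓ V₁) := sup_inf_assoc_of_le Z hK
  rw [hsup, inf_of_le_right hV] at hmod
  have h1 : Z ⊓ V₁ = V₁ := h (Z ⊓ V₁) inf_le_right hmod.symm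
  have h2 : V₁ ≤ Z := by rw [← h1]; exact inf_le_left
  rw [← hsup]
  exact le_antisymm (sup_le (le_trans hK (le_trans h2 le_rfl)) le_rfl) le_sup_right |>.symm ▸
    (sup_eq_right.mpr (le_trans hK h2)) ▸ rfl

lemma smallIn_sup {K₁ K₂ V : Submodule R M} (h1 : SmallIn K₁ V) (h2 : SmallIn K₂ V)
    (hK1 : K₁ ≤ V) (hK2 : K₂ ≤ V) : SmallIn (K₁ ⊔ K₂) V := by
  intro Z hZ hsup
  rw [sup_assoc] at hsup
  have hZ' : K₂ ⊔ Z ≤ V := sup_le hK2 hZ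
  have := h1 (K₂ ⊔ Z) hZ' hsup
  exact h2 Z hZ this

/-- Transfer: relative smallness gives smallness of the `comap` in the subtype module. -/
lemma smallSub_comap_of_smallIn {K N : Submodule R M} (hK : K ≤ N) (h : SmallIn K N) :
    SmallSub R (K.comap N.subtype) := by
  intro Z' hZ' hsup
  apply hZ'
  have hinj : Function.Injective (Submodule.map N.subtype) :=
    Submodule.map_injective_of_injective N.injective_subtype
  have hmap : K ⊔ Submodule.map N.subtype Z' = N := by
    have : Submodule.map N.subtype (K.comap N.subtype ⊔ Z') = Submodule.map N.subtype ⊤ := by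
      rw [hsup]
    rw [Submodule.map_sup, Submodule.map_comap_subtype, Submodule.map_top,
      Submodule.range_subtype, inf_of_le_right hK] at this
    exact this
  have : Submodule.map N.subtype Z' = N := h _ (Submodule.map_subtype_le N Z') hmap
  apply hinj
  rw [this, Submodule.map_top, Submodule.range_subtype]

/-- Transfer: the `comap` form of δ-smallness gives the relative form. -/
lemma deltaSmallIn_of_comap {N L : Submodule R M}
    (h : DeltaSmall R ((N ⊓ L).comap N.subtype)) : DeltaSmallIn (N ⊓ L) N := by
  intro Z hZ hsup hsing
  by_contra hne
  have hinj : Function.Injective (Submodule.map N.subtype) :=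
    Submodule.map_injective_of_injective N.injective_subtype
  have hZ'ne : Z.comap N.subtype ≠ ⊤ := by
    intro htop
    apply hne
    have : Submodule.map N.subtype (Z.comap N.subtype) = Submodule.map N.subtype ⊤ := by rw [htop]
    rw [Submodule.map_comap_subtype, Submodule.map_top, Submodule.range_subtype,
      inf_of_le_right hZ] at this
    exact this
  have hsup' : (N ⊓ L).comap N.subtype ⊔ Z.comap N.subtype = ⊤ := by
    apply hinj
    rw [Submodule.map_sup, Submodule.map_comap_subtype, Submodule.map_comap_subtype,
      Submodule.map_top, Submodule.range_subtype, inf_of_le_right (inf_le_left : N ⊓ L ≤ N),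
      inf_of_le_right hZ]
    exact hsup
  exact h (Z.comap N.subtype) hZ'ne hsing hsup'

/-- Singularity transfers along linear equivalences. -/
lemma isSingular_congr {M₁ M₂ : Type v} [AddCommGroup M₁] [Module R M₁]
    [AddCommGroup M₂] [Module R M₂] (e : M₁ ≃ₗ[R] M₂) (h : IsSingular R M₁) :
    IsSingular R M₂ := by
  obtain ⟨N, iN, iN', L, hL, ⟨f⟩⟩ := h
  exact ⟨N, iN, iN', L, hL, ⟨f.trans e⟩⟩

/-- The quotient of a submodule by a relatively essential submodule is singular. -/
lemma isSingular_of_essIn {E Y : Submodule R M} (hEY : E ≤ Y)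
    (hess : ∀ K, K ≤ Y → K ≠ ⊥ → E ⊓ K ≠ ⊥) :
    IsSingular R (↥Y ⧸ E.comap Y.subtype) := by
  refine ⟨↥Y, inferInstance, inferInstance, E.comap Y.subtype, ?_, ⟨LinearEquiv.refl R _⟩⟩
  intro K' hK'
  have hinj : Function.Injective (Submodule.map Y.subtype) :=
    Submodule.map_injective_of_injective Y.injective_subtype
  have hKne : Submodule.map Y.subtype K' ≠ ⊥ := by
    intro hbot
    apply hK'
    apply hinj
    rw [hbot, Submodule.map_bot]
  have hKY : Submodule.map Y.subtype K' ≤ Y := Submodule.map_subtype_le Y K'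
  have := hess _ hKY hKne
  intro hbot
  apply this
  have : Submodule.map Y.subtype (E.comap Y.subtype ⊓ K') = ⊥ := by rw [hbot, Submodule.map_bot]
  rw [Submodule.map_inf _ Y.injective_subtype, Submodule.map_comap_subtype,
    inf_of_le_right hEY] at this
  exact this

/-- Relative second isomorphism theorem, packaged for singularity transfer. -/
lemma relSecondIso {A B NN : Submodule R M} (h : A ⊔ B = NN) :
    Nonempty ((↥NN ⧸ B.comap NN.subtype) ≃ₗ[R] (↥A ⧸ (A ⊓ B).comap A.subtype)) := by
  subst h
  exact ⟨(LinearMap.quotientInfEquivSupQuotient A B).symm⟩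

end Aux
section Aux2

universe u v

variable {R : Type u} [Ring R] {M : Type v} [AddCommGroup M] [Module R M]

/-- Existence of a relative complement of `D` inside `Y`, which together with `D` is
essential in `Y`. -/
lemma exists_rel_compl (D Y : Submodule R M) (hDY : D ≤ Y) :
    ∃ C, C ≤ Y ∧ C ⊓ D = ⊥ ∧
      (∀ K, K ≤ Y → K ≠ ⊥ → (D ⊔ C) ⊓ K ≠ ⊥) := by
  set s : Set (Submodule R M) := {C | C ≤ Y ∧ C ⊓ D = ⊥} with hs
  have hbot : (⊥ : Submodule R M) ∈ s := ⟨bot_le, bot_inf_eq D⟩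
  have hub : ∀ c ⊆ s, IsChain (· ≤ ·) c → ∃ ub ∈ s, ∀ z ∈ c, z ≤ ub := by
    intro c hcs hchain
    rcases c.eq_empty_or_nonempty with rfl | hne
    · exact ⟨⊥, hbot, by simp⟩
    refine ⟨sSup c, ⟨?_, ?_⟩, fun z hz => le_sSup hz⟩
    · exact sSup_le fun z hz => (hcs hz).1
    · rw [eq_bot_iff]
      intro x hx
      obtain ⟨hx1, hx2⟩ := Submodule.mem_inf.mp hx
      have hdir : DirectedOn (· ≤ ·) c := hchain.directedOn
      obtain ⟨p, hp, hxp⟩ := (Submodule.mem_sSup_of_directed hne hdir).mp hx1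
      have : x ∈ p ⊓ D := ⟨hxp, hx2⟩
      rw [(hcs hp).2] at this
      exact this
  obtain ⟨C, hCmax⟩ := zorn_le₀ s hub
  obtain ⟨hCY, hCD⟩ := hCmax.prop
  refine ⟨C, hCY, hCD, ?_⟩
  intro K hKY hKne hbot'
  obtain ⟨x, hxK, hxne⟩ := (Submodule.ne_bot_iff K).mp hKne
  have hW : C ⊔ Submodule.span R {x} ∈ s := by
    constructor
    · exact sup_le hCY ((Submodule.span_singleton_le_iff_mem x Y).mpr (hKY hxK))
    · rw [eq_bot_iff]
      intro w hw
      obtain ⟨hw1, hw2⟩ := Submodule.mem_inf.mp hw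
      obtain ⟨cc, hcc, y, hy, hsum⟩ := Submodule.mem_sup.mp hw1
      obtain ⟨r, rfl⟩ := Submodule.mem_span_singleton.mp hy
      have hyK : r • x ∈ K := K.smul_mem r hxK
      have hyDC : r • x ∈ (D ⊔ C : Submodule R M) := by
        have : r • x = w - cc := by rw [← hsum]; abel
        rw [this]
        exact Submodule.sub_mem _ ((le_sup_left : D ≤ D ⊔ C) hw2) ((le_sup_right : C ≤ D ⊔ C) hcc)
      have : r • x ∈ (D ⊔ C) ⊓ K := ⟨hyDC, hyK⟩
      rw [hbot'] at this
      have hy0 : r • x = 0 := this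
      have : cc = w := by rw [← hsum, hy0, add_zero]
      subst this
      exact (Submodule.mem_bot R).mpr <| by
        have : cc ∈ C ⊓ D := ⟨hcc, hw2⟩
        rw [hCD] at this; exact this
  have hCW : C ≤ C ⊔ Submodule.span R {x} := le_sup_left
  have := hCmax.eq_of_le hW hCW
  have hxC : x ∈ C := by
    rw [this]
    exact (le_sup_right : Submodule.span R {x} ≤ _) (Submodule.mem_span_singleton_self x)
  have : x ∈ (D ⊔ C) ⊓ K := ⟨(le_sup_right : C ≤ D ⊔ C) hxC, hxK⟩
  rw [hbot'] at this
  exact hxne this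

/-- The key δ-splitting lemma: if `S` is δ-small in `N` and `S ⊔ Z = N`, then
`Z` has a complement in `N` contained in `S`. -/
lemma exists_split {S N Z : Submodule R M} (hSN : S ≤ N) (hδ : DeltaSmallIn S N)
    (hZN : Z ≤ N) (hspan : S ⊔ Z = N) :
    ∃ C, C ≤ S ∧ Z ⊓ C = ⊥ ∧ Z ⊔ C = N := by
  obtain ⟨C, hCS, hCD, hess⟩ := exists_rel_compl (S ⊓ Z) S inf_le_left
  have hZCN : Z ⊔ C ≤ N := sup_le hZN (le_trans hCS hSN)
  have hspan' : S ⊔ (Z ⊔ C) = N := by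
    rw [← sup_assoc, hspan]
    exact sup_eq_left.mpr (le_trans hCS hSN)
  have hinf : S ⊓ (Z ⊔ C) = (S ⊓ Z) ⊔ C := by
    have := sup_inf_assoc_of_le Z (hCS : C ≤ S)
    -- (C ⊔ Z) ⊓ S = C ⊔ (Z ⊓ S)
    rw [sup_comm C Z] at this
    rw [inf_comm, this, sup_comm, inf_comm Z S]
  have hsing : IsSingular R (↥N ⧸ (Z ⊔ C).comap N.subtype) := by
    obtain ⟨e⟩ := relSecondIso (A := S) (B := Z ⊔ C) hspan'
    have hsing' : IsSingular R (↥S ⧸ (S ⊓ (Z ⊔ C)).comap S.subtype) := by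
      rw [hinf]
      exact isSingular_of_essIn (sup_le inf_le_left hCS) hess
    exact isSingular_congr e.symm hsing'
  have hZC : Z ⊔ C = N := hδ (Z ⊔ C) hZCN hspan' hsing
  refine ⟨C, hCS, ?_, hZC⟩
  rw [eq_bot_iff]
  intro x hx
  obtain ⟨hx1, hx2⟩ := Submodule.mem_inf.mp hx
  have : x ∈ C ⊓ (S ⊓ Z) := ⟨hx2, ⟨hCS hx2, hx1⟩⟩
  rw [hCD] at this
  exact this

end Aux2
section Aux3

universe u

variable {R : Type u} [Ring R]

lemma radM_le_coatom {m : Submodule R R} (hm : IsCoatom m) : (radM R : Submodule R R) ≤ m :=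
  sInf_le hm

/-- The radical of `R` is small in `R`. -/
lemma smallSub_radM_ring : SmallSub R (radM R : Submodule R R) := by
  intro Z hZ htop
  obtain ⟨m, hm, hZm⟩ := Ideal.exists_le_maximal (Z : Ideal R) hZ
  have hcoatom : IsCoatom (m : Submodule R R) := Ideal.isMaximal_def.mp hm
  have : (radM R : Submodule R R) ⊔ Z ≤ m := sup_le (radM_le_coatom hcoatom) hZm
  rw [htop] at this
  exact hcoatom.1 (top_le_iff.mp this)

lemma one_mem_eq_top {p : Submodule R R} (h : (1 : R) ∈ p) : p = ⊤ := by
  rw [Submodule.eq_top_iff']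
  intro x
  simpa using p.smul_mem x h

/-- If `j` is in the radical, then `1 - j` has a left inverse. -/
lemma exists_left_inv {j : R} (hj : j ∈ (radM R : Submodule R R)) :
    ∃ w : R, w * (1 - j) = 1 := by
  have h1 : (1 : R) ∈ Submodule.span R {1 - j} ⊔ (radM R : Submodule R R) := by
    rw [Submodule.mem_sup]
    exact ⟨1 - j, Submodule.mem_span_singleton_self _, j, hj, sub_add_cancel 1 j⟩
  have htop : Submodule.span R {1 - j} ⊔ (radM R : Submodule R R) = ⊤ := one_mem_eq_top h1
  have hspan : Submodule.span R {(1 : R) - j} = ⊤ := by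
    by_contra hne
    rw [sup_comm] at htop
    exact smallSub_radM_ring _ hne htop
  have : (1 : R) ∈ Submodule.span R {1 - j} := by rw [hspan]; trivial
  obtain ⟨w, hw⟩ := Submodule.mem_span_singleton.mp this
  exact ⟨w, by rwa [smul_eq_mul] at hw⟩

/-- The annihilator of an element, as a left ideal. -/
def annIdeal (y : R) : Submodule R R := LinearMap.ker (LinearMap.toSpanSingleton R R y)

lemma mem_annIdeal {y r : R} : r ∈ annIdeal y ↔ r * y = 0 := by
  simp [annIdeal, LinearMap.mem_ker, LinearMap.toSpanSingleton_apply, smul_eq_mul]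


end Aux3
section Aux4

universe u

variable {R : Type u} [Ring R]

/-- In a semilocal ring, among a nonempty set of elements there is one whose annihilator
is maximal modulo the radical. -/
lemma exists_max_ann (hss : IsSemisimpleModule R (R ⧸ (radM R : Submodule R R)))
    {T : Set R} (hT : T.Nonempty) :
    ∃ x ∈ T, ∀ y ∈ T,
      annIdeal x ⊔ (radM R : Submodule R R) ≤ annIdeal y ⊔ (radM R : Submodule R R) →
      annIdeal y ⊔ (radM R : Submodule R R) = annIdeal x ⊔ (radM R : Submodule R R) := by
  set J : Submodule R R := radM R with hJdef
  haveI : IsSemisimpleModule R (R ⧸ J) := hss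
  haveI : Module.Finite R (R ⧸ J) :=
    Module.Finite.of_surjective J.mkQ (Submodule.mkQ_surjective J)
  haveI : IsNoetherian R (R ⧸ J) := inferInstance
  have hmaxprop := set_has_maximal_iff_noetherian.mpr (inferInstance : IsNoetherian R (R ⧸ J))
  set f : R → Submodule R (R ⧸ J) := fun y => (annIdeal y ⊔ J).map J.mkQ with hf
  obtain ⟨pbar, hpbar, hpmax⟩ := hmaxprop (f '' T) (hT.image f)
  obtain ⟨x, hxT, hfx⟩ := hpbar
  refine ⟨x, hxT, ?_⟩
  intro y hyT hle
  have hcomap : ∀ z : R, (Submodule.comap J.mkQ ((annIdeal z ⊔ J).map J.mkQ)) = annIdeal z ⊔ J := by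
    intro z
    rw [Submodule.comap_map_eq, Submodule.ker_mkQ, sup_assoc, sup_idem]
  have hmaple : f x ≤ f y := by
    rw [hf]
    exact Submodule.map_mono hle
  have heq : f y = f x := by
    have hnot := hpmax (f y) ⟨y, hyT, rfl⟩
    rw [← hfx] at hnot
    by_contra hne
    exact hnot (lt_of_le_of_ne hmaple (Ne.symm hne))
  calc annIdeal y ⊔ J = Submodule.comap J.mkQ (f y) := (hcomap y).symm
    _ = Submodule.comap J.mkQ (f x) := by rw [heq]
    _ = annIdeal x ⊔ J := hcomap x

/-- Every coatom (maximal left ideal) of a δ-supplemented semilocal ring has a supplement. -/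
lemma coatom_supplement (hds : DeltaSupplemented R R)
    (hss : IsSemisimpleModule R (R ⧸ (radM R : Submodule R R)))
    {m : Submodule R R} (hm : IsCoatom m) :
    ∃ Λ : Submodule R R, Λ ⊔ m = ⊤ ∧ SmallIn (Λ ⊓ m) Λ := by
  set J : Submodule R R := radM R with hJdef
  obtain ⟨N, hN1, hN2⟩ := hds m
  set S : Submodule R R := N ⊓ m with hSdef
  have hδ : DeltaSmallIn S N := deltaSmallIn_of_comap hN2
  -- spanning property from the coatom
  have hco : ∀ Y : Submodule R R, Y ≤ N → ¬ Y ≤ S → S ⊔ Y = N := by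
    intro Y hYN hYS
    have hYm : ¬ Y ≤ m := fun h => hYS (le_inf hYN h)
    have hYmtop : m ⊔ Y = ⊤ := hm.2 _ (left_lt_sup.mpr hYm)
    have hmod : (Y ⊔ m) ⊓ N = Y ⊔ (m ⊓ N) := sup_inf_assoc_of_le m hYN
    rw [sup_comm Y m, hYmtop, top_inf_eq] at hmod
    rw [hSdef, inf_comm N m, sup_comm]
    exact hmod.symm
  -- pick a maximal-annihilator element of N \ S
  have hNm : ¬ N ≤ S := by
    intro h
    have h1 : N ≤ m := le_trans h inf_le_right
    have : N ⊔ m = m := sup_eq_right.mpr h1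
    rw [hN1] at this
    exact hm.1 this.symm
  obtain ⟨x₀, hx₀N, hx₀S⟩ := SetLike.not_le_iff_exists.mp hNm
  obtain ⟨x, ⟨hxN, hxS⟩, hmax⟩ :=
    exists_max_ann hss (T := {y : R | y ∈ N ∧ y ∉ S}) ⟨x₀, hx₀N, hx₀S⟩
  have hΛN : Submodule.span R {x} ≤ N := (Submodule.span_singleton_le_iff_mem x N).mpr hxN
  have hxm : x ∉ m := fun h => hxS ⟨hxN, h⟩
  refine ⟨Submodule.span R {x}, ?_, ?_⟩
  · have hnotle : ¬ Submodule.span R {x} ≤ m := fun h =>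
      hxm (h (Submodule.mem_span_singleton_self x))
    have := hm.2 _ (left_lt_sup.mpr hnotle)
    rw [sup_comm] at this
    exact this
  · intro Z hZ hsup
    -- Λ ⊓ m ≤ S
    have hΛmS : Submodule.span R {x} ⊓ m ≤ S := le_inf (le_trans inf_le_left hΛN) inf_le_right
    -- Z is not contained in S
    have hZS : ¬ Z ≤ S := by
      intro h
      apply hxS
      have : Submodule.span R {x} ≤ S := by
        rw [← hsup]
        exact sup_le hΛmS h
      exact ⟨hxN, (this (Submodule.mem_span_singleton_self x)).2⟩
    have hspanZ : S ⊔ Z = N := hco Z (le_trans hZ hΛN) hZS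
    obtain ⟨C, hCS, hZC, hZCN⟩ := exists_split inf_le_left hδ (le_trans hZ hΛN) hspanZ
    -- decompose x
    have hxZC : x ∈ Z ⊔ C := by rw [hZCN]; exact hxN
    obtain ⟨z, hz, c, hc, hsum⟩ := Submodule.mem_sup.mp hxZC
    -- z ∉ S, z ∈ N
    have hzS : z ∉ S := by
      intro h
      apply hxS
      refine ⟨hxN, ?_⟩
      have : x ∈ S := by rw [← hsum]; exact S.add_mem h (hCS hc)
      exact this.2
    have hzN : z ∈ N := le_trans hZ hΛN hz
    -- annihilator grows
    have hannle : annIdeal x ≤ annIdeal z := by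
      intro r hr
      have hrx : r * x = 0 := mem_annIdeal.mp hr
      have h1 : r * z + r * c = 0 := by
        rw [← mul_add, hsum, hrx]
      have hrz : r * z ∈ Z := by
        have := Z.smul_mem r hz
        rwa [smul_eq_mul] at this
      have hrc : -(r * c) ∈ C := by
        apply C.neg_mem
        have := C.smul_mem r hc
        rwa [smul_eq_mul] at this
      have : r * z ∈ Z ⊓ C := ⟨hrz, by rw [eq_neg_of_add_eq_zero_left h1]; exact hrc⟩
      rw [hZC] at this
      exact mem_annIdeal.mpr this
    have hanneq : annIdeal z ⊔ J = annIdeal x ⊔ J :=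
      hmax z ⟨hzN, hzS⟩ (sup_le_sup_right hannle J)
    -- write c = s * x
    have hcΛ : c ∈ Submodule.span R {x} := by
      have hceq : c = x - z := by
        rw [← hsum]; abel
      rw [hceq]
      exact Submodule.sub_mem _ (Submodule.mem_span_singleton_self x) (hZ hz)
    obtain ⟨s, hs⟩ := Submodule.mem_span_singleton.mp hcΛ
    rw [smul_eq_mul] at hs
    -- s kills z
    have hsz : s * z = 0 := by
      have h1 : s * z + s * c = c := by rw [← mul_add, hsum, hs]
      have hszZ : s * z ∈ Z := by
        have := Z.smul_mem s hz
        rwa [smul_eq_mul] at this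
      have hszC : s * z ∈ C := by
        have h2 : s * z = c - s * c := by rw [eq_sub_of_add_eq h1]
        rw [h2]
        apply C.sub_mem hc
        have := C.smul_mem s hc
        rwa [smul_eq_mul] at this
      have : s * z ∈ Z ⊓ C := ⟨hszZ, hszC⟩
      rw [hZC] at this
      exact this
    -- decompose s
    have hsmem : s ∈ annIdeal x ⊔ J := by
      rw [← hanneq]
      exact (le_sup_left : annIdeal z ≤ _) (mem_annIdeal.mpr hsz)
    obtain ⟨a, ha, j, hj, hsaj⟩ := Submodule.mem_sup.mp hsmem
    have hax : a * x = 0 := mem_annIdeal.mp ha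
    have hc_eq : c = j * x := by
      calc c = s * x := hs.symm
        _ = (a + j) * x := by rw [hsaj]
        _ = a * x + j * x := add_mul a j x
        _ = j * x := by rw [hax, zero_add]
    have hz_eq : z = (1 - j) * x := by
      have hxzc : x = z + c := hsum.symm
      rw [sub_mul, one_mul, ← hc_eq]
      rw [hxzc]
      abel
    obtain ⟨w, hw⟩ := exists_left_inv hj
    have hxZ : x ∈ Z := by
      have hwz : w * z ∈ Z := by
        have := Z.smul_mem w hz
        rwa [smul_eq_mul] at this
      have : w * z = x := by
        rw [hz_eq, ← mul_assoc, hw, one_mul]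
      rwa [this] at hwz
    exact le_antisymm hZ ((Submodule.span_singleton_le_iff_mem x Z).mpr hxZ)

end Aux4
section Aux5

universe u v

variable {R : Type u} [Ring R] {M : Type v} [AddCommGroup M] [Module R M]

/-- Relative supplementedness of a submodule. -/
def SupplementedIn (X : Submodule R M) : Prop :=
  ∀ U, U ≤ X → ∃ V, V ≤ X ∧ V ⊔ U = X ∧ SmallIn (V ⊓ U) V

lemma smallIn_bot : SmallIn (⊥ : Submodule R M) ⊥ := by
  intro Z hZ _
  exact le_bot_iff.mp hZ

lemma supplementedIn_bot : SupplementedIn (⊥ : Submodule R M) := by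
  intro U hU
  refine ⟨⊥, le_rfl, by simp [le_bot_iff.mp hU], by simpa using smallIn_bot⟩

lemma supplementedIn_of_coatom_supplement {Λ mm : Submodule R M} (hm : IsCoatom mm)
    (h1 : Λ ⊔ mm = ⊤) (h2 : SmallIn (Λ ⊓ mm) Λ) : SupplementedIn Λ := by
  have hkey : ∀ Y, Y ≤ Λ → ¬ Y ≤ Λ ⊓ mm → Y = Λ := by
    intro Y hYΛ hY
    have hYm : ¬ Y ≤ mm := fun h => hY (le_inf hYΛ h)
    have htop : mm ⊔ Y = ⊤ := hm.2 _ (left_lt_sup.mpr hYm)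
    have hmod : (Y ⊔ mm) ⊓ Λ = Y ⊔ (mm ⊓ Λ) := sup_inf_assoc_of_le mm hYΛ
    rw [sup_comm Y mm, htop, top_inf_eq] at hmod
    have := h2 Y hYΛ ?_
    · exact this
    · rw [inf_comm Λ mm, sup_comm]
      exact hmod.symm
  intro U hU
  by_cases hUc : U ≤ Λ ⊓ mm
  · refine ⟨Λ, le_rfl, sup_eq_left.mpr hU, ?_⟩
    rw [inf_of_le_right hU]
    exact smallIn_mono hUc inf_le_left h2
  · have hUΛ : U = Λ := hkey U hU hUc
    refine ⟨⊥, bot_le, by rw [bot_sup_eq, hUΛ], ?_⟩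
    rw [bot_inf_eq]
    exact smallIn_bot

lemma inf_sup_est {A B C : Submodule R M} :
    (A ⊔ B) ⊓ C ≤ (A ⊓ (B ⊔ C)) ⊔ (B ⊓ (A ⊔ C)) := by
  rintro x hx
  obtain ⟨hx1, hx2⟩ := Submodule.mem_inf.mp hx
  obtain ⟨a, ha, b, hb, hab⟩ := Submodule.mem_sup.mp hx1
  have haBC : a ∈ B ⊔ C := by
    have : a = x - b := by rw [← hab]; abel
    rw [this]
    exact Submodule.sub_mem _ ((le_sup_right : C ≤ B ⊔ C) hx2) ((le_sup_left : B ≤ B ⊔ C) hb)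
  have hbAC : b ∈ A ⊔ C := by
    have : b = x - a := by rw [← hab]; abel
    rw [this]
    exact Submodule.sub_mem _ ((le_sup_right : C ≤ A ⊔ C) hx2) ((le_sup_left : A ≤ A ⊔ C) ha)
  rw [← hab]
  exact Submodule.add_mem_sup ⟨ha, haBC⟩ ⟨hb, hbAC⟩

lemma supplementedIn_sup {X₁ X₂ : Submodule R M}
    (h1 : SupplementedIn X₁) (h2 : SupplementedIn X₂) : SupplementedIn (X₁ ⊔ X₂) := by
  intro U hU
  obtain ⟨V₁, hV₁X, hV₁sup, hV₁small⟩ := h1 (X₁ ⊓ (X₂ ⊔ U)) inf_le_left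
  obtain ⟨V₂, hV₂X, hV₂sup, hV₂small⟩ := h2 (X₂ ⊓ (V₁ ⊔ U)) inf_le_left
  have hV₁X' : V₁ ≤ X₁ ⊔ X₂ := le_trans hV₁X le_sup_left
  have hV₂X' : V₂ ≤ X₁ ⊔ X₂ := le_trans hV₂X le_sup_right
  have c1 : V₁ ⊔ X₂ ⊔ U = X₁ ⊔ X₂ := by
    apply le_antisymm
    · exact sup_le (sup_le hV₁X' le_sup_right) hU
    · apply sup_le _ (le_trans le_sup_right (le_sup_left : V₁ ⊔ X₂ ≤ _))
      have : X₁ = V₁ ⊔ (X₁ ⊓ (X₂ ⊔ U)) := hV₁sup.symm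
      rw [this]
      apply sup_le
      · exact le_trans (le_sup_left : V₁ ≤ V₁ ⊔ X₂) le_sup_left
      · refine le_trans inf_le_right ?_
        apply sup_le
        · exact le_trans (le_sup_right : X₂ ≤ V₁ ⊔ X₂) le_sup_left
        · exact le_sup_right
  have c2 : (V₁ ⊔ V₂) ⊔ U = X₁ ⊔ X₂ := by
    apply le_antisymm
    · exact sup_le (sup_le hV₁X' hV₂X') hU
    · rw [← c1]
      apply sup_le
      · apply sup_le
        · exact le_trans (le_sup_left : V₁ ≤ V₁ ⊔ V₂) le_sup_left
        · have : X₂ = V₂ ⊔ (X₂ ⊓ (V₁ ⊔ U)) := hV₂sup.symm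
          rw [this]
          apply sup_le
          · exact le_trans (le_sup_right : V₂ ≤ V₁ ⊔ V₂) le_sup_left
          · refine le_trans inf_le_right ?_
            apply sup_le
            · exact le_trans (le_sup_left : V₁ ≤ V₁ ⊔ V₂) le_sup_left
            · exact le_sup_right
      · exact le_sup_right
  refine ⟨V₁ ⊔ V₂, sup_le hV₁X' hV₂X', c2, ?_⟩
  -- smallness
  have hK1 : SmallIn (V₁ ⊓ (X₂ ⊔ U)) V₁ := by
    have : V₁ ⊓ (X₁ ⊓ (X₂ ⊔ U)) = V₁ ⊓ (X₂ ⊔ U) := by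
      rw [← inf_assoc, inf_of_le_left hV₁X]
    rwa [this] at hV₁small
  have hK2 : SmallIn (V₂ ⊓ (V₁ ⊔ U)) V₂ := by
    have : V₂ ⊓ (X₂ ⊓ (V₁ ⊔ U)) = V₂ ⊓ (V₁ ⊔ U) := by
      rw [← inf_assoc, inf_of_le_left hV₂X]
    rwa [this] at hV₂small
  have hK1' : SmallIn (V₁ ⊓ (X₂ ⊔ U)) (V₁ ⊔ V₂) := smallIn_of_le hK1 inf_le_left le_sup_left
  have hK2' : SmallIn (V₂ ⊓ (V₁ ⊔ U)) (V₁ ⊔ V₂) := smallIn_of_le hK2 inf_le_left le_sup_right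
  have hsum : SmallIn ((V₁ ⊓ (X₂ ⊔ U)) ⊔ (V₂ ⊓ (V₁ ⊔ U))) (V₁ ⊔ V₂) :=
    smallIn_sup hK1' hK2' (le_trans inf_le_left le_sup_left)
      (le_trans inf_le_left le_sup_right)
  apply smallIn_mono _ (sup_le (le_trans inf_le_left le_sup_left)
      (le_trans inf_le_left le_sup_right)) hsum
  refine le_trans inf_sup_est (sup_le_sup ?_ le_rfl)
  exact inf_le_inf_left V₁ (sup_le_sup_right hV₂X U)

end Aux5
section Aux

universe u v

variable {R : Type u} [Ring R] {M : Type v} [AddCommGroup M] [Module R M]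

/-- If the intersection `N ⊓ L` is small in the submodule `N` (in the `comap` sense),
then it is small in the ambient module. -/
lemma smallSub_of_smallSub_comap {N L : Submodule R M}
    (h : SmallSub R ((N ⊓ L).comap N.subtype)) : SmallSub R (N ⊓ L) := by
  intro Z hZ htop
  -- N = (N ⊓ L) ⊔ (N ⊓ Z)
  have hmod : ((N ⊓ L) ⊔ Z) ⊓ N = (N ⊓ L) ⊔ (Z ⊓ N) :=
    sup_inf_assoc_of_le Z inf_le_left
  rw [htop, top_inf_eq] at hmod
  -- transfer to ↥N
  have hmap : Submodule.map N.subtype (((N ⊓ L).comap N.subtype) ⊔ ((N ⊓ Z).comap N.subtype))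
      = Submodule.map N.subtype (⊤ : Submodule R ↥N) := by
    rw [Submodule.map_sup, Submodule.map_comap_subtype, Submodule.map_comap_subtype,
      Submodule.map_top, Submodule.range_subtype]
    rw [inf_of_le_right (inf_le_left : N ⊓ L ≤ N), inf_of_le_right (inf_le_left : N ⊓ Z ≤ N)]
    rw [inf_comm Z N] at hmod
    exact hmod.symm
  have hinj : Function.Injective (Submodule.map N.subtype) :=
    Submodule.map_injective_of_injective N.injective_subtype
  have hsup : ((N ⊓ L).comap N.subtype) ⊔ ((N ⊓ Z).comap N.subtype) = ⊤ := hinj hmap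
  by_cases hZt : ((N ⊓ Z).comap N.subtype) = ⊤
  · -- then N ≤ Z, so Z = ⊤
    have : Submodule.map N.subtype ((N ⊓ Z).comap N.subtype) = N := by
      rw [hZt, Submodule.map_top, Submodule.range_subtype]
    rw [Submodule.map_comap_subtype, inf_of_le_right (inf_le_left : N ⊓ Z ≤ N)] at this
    have hNZ : N ≤ Z := le_of_eq_of_le this.symm inf_le_right
    apply hZ
    rw [eq_top_iff, ← htop]
    exact sup_le (le_trans inf_le_left hNZ) le_rfl
  · exact h _ hZt hsup

/-- A submodule that is small in the ambient module is contained in the radical. -/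
lemma smallSub_le_radM {K : Submodule R M} (h : SmallSub R K) : K ≤ radM R := by
  apply le_sInf
  intro m hm
  by_contra hKm
  have hlt : m < m ⊔ K := left_lt_sup.2 hKm
  have := hm.2 _ hlt
  rw [sup_comm] at this
  exact h m hm.1 this

end Aux

theorem semiperfect_iff_deltaSemiperfect_and_semilocal (R : Type*) [Ring R] :
    Supplemented R R ↔
      DeltaSupplemented R R ∧ IsSemisimpleModule R (R ⧸ (radM R : Submodule R R)) := by
  constructor
  · intro hsup
    constructor
    · intro L
      obtain ⟨N, hN1, hN2⟩ := hsup L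
      exact ⟨N, hN1, fun Z hZ _ => hN2 Z hZ⟩
    · set J : Submodule R R := radM R with hJ
      refine (isSemisimpleModule_iff ..).mpr ⟨?_⟩
      intro Q
      set L : Submodule R R := Q.comap J.mkQ with hL
      have hJL : J ≤ L := by
        rw [hL]
        intro x hx
        have : J.mkQ x = 0 := by
          rw [← LinearMap.mem_ker, Submodule.ker_mkQ]; exact hx
        simp [Submodule.mem_comap, this]
      obtain ⟨N, hN1, hN2⟩ := hsup L
      have hsmall : SmallSub R (N ⊓ L) := smallSub_of_smallSub_comap hN2
      have hrad : N ⊓ L ≤ J := smallSub_le_radM hsmall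
      refine ⟨N.map J.mkQ, ?_, ?_⟩
      · -- disjointness
        rw [disjoint_iff]
        rw [eq_bot_iff]
        rintro x ⟨hx1, hx2⟩
        obtain ⟨n, hn, rfl⟩ := hx2
        have hnL : n ∈ L := by
          rw [hL, Submodule.mem_comap]; exact hx1
        have : n ∈ J := hrad ⟨hn, hnL⟩
        simp only [Submodule.mem_bot, Submodule.mkQ_apply]
        rwa [Submodule.Quotient.mk_eq_zero]
      · -- codisjointness
        rw [codisjoint_iff]
        have hQL : Q = L.map J.mkQ := by
          rw [hL, Submodule.map_comap_eq, Submodule.range_mkQ, top_inf_eq]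
        rw [hQL, ← Submodule.map_sup, sup_comm, hN1, Submodule.map_top, Submodule.range_mkQ]
  · rintro ⟨hds, hss⟩
    intro L
    set 𝒮 : Set (Submodule R R) :=
      {Λ | ∃ mm : Submodule R R, IsCoatom mm ∧ Λ ⊔ mm = ⊤ ∧ SmallIn (Λ ⊓ mm) Λ} with h𝒮
    have hSig : L ⊔ sSup 𝒮 = ⊤ := by
      by_contra hne
      obtain ⟨mm, hmmmax, hle⟩ := Ideal.exists_le_maximal _ hne
      have hmm : IsCoatom (mm : Submodule R R) := Ideal.isMaximal_def.mp hmmmax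
      obtain ⟨Λ, h1, h2⟩ := coatom_supplement hds hss hmm
      have hΛ : Λ ≤ mm :=
        le_trans (le_sSup (show Λ ∈ 𝒮 from ⟨mm, hmm, h1, h2⟩))
          (le_trans le_sup_right hle)
      have : Λ ⊔ mm = mm := sup_eq_right.mpr hΛ
      rw [h1] at this
      exact hmm.1 this.symm
    have h1mem : (1 : R) ∈ L ⊔ sSup 𝒮 := by rw [hSig]; trivial
    obtain ⟨l, hl, t, ht, hsum⟩ := Submodule.mem_sup.mp h1mem
    obtain ⟨s, hsS, hts⟩ := Submodule.mem_sSup_iff_exists_finset.mp ht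
    set X : Submodule R R := s.sup id with hX
    have htX : t ∈ X := by
      rw [hX, Finset.sup_eq_iSup]
      simpa using hts
    have hXsupp : SupplementedIn X := by
      rw [hX]
      apply Finset.sup_induction supplementedIn_bot
      · intro a ha b hb
        exact supplementedIn_sup ha hb
      · intro i hi
        obtain ⟨mm, hmb, hh1, hh2⟩ := hsS hi
        exact supplementedIn_of_coatom_supplement hmb hh1 hh2
    have hXL : X ⊔ L = ⊤ := by
      apply one_mem_eq_top
      rw [Submodule.mem_sup]
      exact ⟨t, htX, l, hl, by rw [add_comm]; exact hsum⟩
    obtain ⟨V, hVX, hVsup, hVsmall⟩ := hXsupp (X ⊓ L) inf_le_left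
    refine ⟨V, ?_, ?_⟩
    · rw [eq_top_iff, ← hXL]
      apply sup_le _ le_sup_right
      rw [← hVsup]
      exact sup_le le_sup_left (le_trans inf_le_right le_sup_right)
    · apply smallSub_comap_of_smallIn inf_le_left
      have heq : V ⊓ L = V ⊓ (X ⊓ L) := by rw [← inf_assoc, inf_of_le_left hVX]
      rw [heq]
      exact hVsmall
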